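/- Let w be an infinite binary word with only finitely many weakly abelian unbordered factors (i.e., there is a constant C such that every factor of length at least C is weakly abelian bordered). Then w is balanced: there is a constant K such that for any two factors u, v of w with |u| = |v| and any letter a, ||u|_a − |v|_a| ≤ K. -/

import Mathlib

/-- The factor of the infinite word `w` starting at position `i` of length `n`. -/
def factor {α : Type*} (w : ℕ → α) (i n : ℕ) : List α :=
  (List.range n).map (fun k => w (i + k))

def SameFreq {α : Type*} [DecidableEq α] (u v : List α) : Prop :=
  ∀ a : α, (u.count a : ℚ) / u.length = (v.count a : ℚ) / v.length

def WeaklyAbelianBordered {α : Type*} [DecidableEq α] (w : List α) : Prop :=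
  ∃ p s : List α, p <+: w ∧ s <:+ w ∧ p ≠ [] ∧ p.length < w.length ∧
    s ≠ [] ∧ s.length < w.length ∧ SameFreq p s

namespace Aux

variable {α : Type*} (w : ℕ → α)

lemma length_factor (i n : ℕ) : (factor w i n).length = n := by
  simp [factor]

lemma factor_add (i m n : ℕ) :
    factor w i (m + n) = factor w i m ++ factor w (i + m) n := by
  simp [factor, List.range_add, List.map_map, Function.comp]
  intro a _
  congr 1
  omega

lemma factor_take (i n m : ℕ) (h : m ≤ n) :
    (factor w i n).take m = factor w i m := by
  simp only [factor, ← List.map_take, List.take_range, Nat.min_eq_left h]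

lemma prefix_factor {p : List α} {i n : ℕ} (h : p <+: factor w i n) :
    p = factor w i p.length := by
  have h1 : p = (factor w i n).take p.length := (List.prefix_iff_eq_take.mp h)
  have h2 : p.length ≤ n := by
    have := h.length_le; simpa [length_factor] using this
  rw [h1, factor_take w i n _ h2, h1]
  simp [length_factor, List.length_take, Nat.min_eq_left h2]

lemma suffix_factor {s : List α} {i n : ℕ} (h : s <:+ factor w i n) :
    s = factor w (i + (n - s.length)) s.length := by
  have h2 : s.length ≤ n := by
    have := h.length_le; simpa [length_factor] using this
  obtain ⟨t, ht⟩ := h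
  have hts : t.length + s.length = n := by
    have := congrArg List.length ht
    simpa [length_factor] using this
  have hdecomp : factor w i n = factor w i t.length ++ factor w (i + t.length) s.length := by
    rw [← hts, factor_add]
  rw [hdecomp] at ht
  have := List.append_inj_right ht (by simp [length_factor])
  rw [show i + (n - s.length) = i + t.length by omega]
  exact this

/-- Prefix-count function. -/
def F (w : ℕ → Bool) (n : ℕ) : ℤ := ((factor w 0 n).count true : ℤ)

lemma count_true_factor (w : ℕ → Bool) (i n : ℕ) :
    ((factor w i n).count true : ℤ) = F w (i + n) - F w i := by
  have h : factor w 0 (i + n) = factor w 0 i ++ factor w i n := by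
    have := factor_add w 0 i n
    simpa using this
  simp only [F, h, List.count_append]
  push_cast
  ring

lemma F_mono (w : ℕ → Bool) {i j : ℕ} (h : i ≤ j) : F w i ≤ F w j := by
  have := count_true_factor w i (j - i)
  rw [show i + (j - i) = j by omega] at this
  have h0 : (0:ℤ) ≤ ((factor w i (j-i)).count true : ℤ) := by positivity
  omega

lemma F_lip (w : ℕ → Bool) {i j : ℕ} (h : i ≤ j) : F w j - F w i ≤ (j : ℤ) - i := by
  have := count_true_factor w i (j - i)
  rw [show i + (j - i) = j by omega] at this
  have hle : (factor w i (j-i)).count true ≤ (factor w i (j-i)).length :=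
    List.count_le_length
  rw [length_factor] at hle
  have : F w j - F w i ≤ ((j - i : ℕ) : ℤ) := by
    rw [← this]; exact_mod_cast hle
  omega

/-- From a weakly abelian border, get a prefix chord parallel to a suffix chord. -/
lemma borders (w : ℕ → Bool) {C : ℕ}
    (h : ∀ i n, C ≤ n → WeaklyAbelianBordered (factor w i n))
    (i n : ℕ) (hC : C ≤ n) :
    ∃ P S : ℕ, 0 < P ∧ P < n ∧ 0 < S ∧ S < n ∧
      (F w (i + P) - F w i) * S = (F w (i + n) - F w (i + n - S)) * P := by
  obtain ⟨p, s, hp, hs, hpne, hplt, hsne, hslt, hfreq⟩ := h i n hC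
  refine ⟨p.length, s.length, List.length_pos_iff.mpr hpne, ?_, List.length_pos_iff.mpr hsne, ?_, ?_⟩
  · rwa [length_factor] at hplt
  · rwa [length_factor] at hslt
  · have hP : 0 < p.length := List.length_pos_iff.mpr hpne
    have hS : 0 < s.length := List.length_pos_iff.mpr hsne
    have hf := hfreq true
    rw [div_eq_div_iff (by exact_mod_cast hP.ne') (by exact_mod_cast hS.ne')] at hf
    have hf' : (p.count true : ℤ) * s.length = (s.count true : ℤ) * p.length := by
      exact_mod_cast hf
    have hpe := prefix_factor w hp
    have hse := suffix_factor w hs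
    have hSn : s.length ≤ n := by
      have := hs.length_le; simpa [length_factor] using this
    have hcp : (p.count true : ℤ) = F w (i + p.length) - F w i := by
      rw [hpe] at hf' ⊢
      · rw [length_factor] at *
        exact count_true_factor w i p.length
    have hcs : (s.count true : ℤ) = F w (i + n) - F w (i + n - s.length) := by
      conv_lhs => rw [hse]
      rw [count_true_factor]
      rw [show i + (n - s.length) + s.length = i + n by omega,
          show i + (n - s.length) = i + n - s.length by omega]
    rw [hcp, hcs] at hf'
    exact hf'

/-- No long factor has its path strictly below the chord. -/
lemma no_low (w : ℕ → Bool) {C : ℕ}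
    (h : ∀ i n, C ≤ n → WeaklyAbelianBordered (factor w i n))
    (i n : ℕ) (hC : C ≤ n)
    (harc : ∀ k, i < k → k < i + n →
      (n : ℤ) * F w k < ((i : ℤ) + n - k) * F w i + ((k : ℤ) - i) * F w (i + n)) :
    False := by
  obtain ⟨P, S, hP, hPn, hS, hSn, heq⟩ := borders w h i n hC
  have h1 := harc (i + P) (by omega) (by omega)
  have h2 := harc (i + n - S) (by omega) (by omega)
  push_cast [show ((i + n - S : ℕ) : ℤ) = (i : ℤ) + n - S by omega] at h1 h2
  -- h1 : n * F(i+P) < (n - P) * F i + P * F(i+n)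
  -- h2 : n * F(i+n-S) < S * F i + (n - S) * F(i+n)
  set A := F w (i + P) - F w i with hA
  set B := F w (i + n) - F w (i + n - S) with hB
  set D := F w (i + n) - F w i with hD
  have h1' : (n : ℤ) * A < P * D := by simp only [hA, hD]; nlinarith [h1]
  have h2' : (S : ℤ) * D < n * B := by simp only [hB, hD]; nlinarith [h2]
  have hS' : (0 : ℤ) < S := by exact_mod_cast hS
  have hP' : (0 : ℤ) < P := by exact_mod_cast hP
  have hm1 := mul_lt_mul_of_pos_right h1' hS'
  have hm2 := mul_lt_mul_of_pos_right h2' hP'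
  have hne : (n : ℤ) * (A * S) = n * (B * P) := by rw [heq]
  nlinarith [hm1, hm2, hne]

/-- No long factor has its path strictly above the chord. -/
lemma no_high (w : ℕ → Bool) {C : ℕ}
    (h : ∀ i n, C ≤ n → WeaklyAbelianBordered (factor w i n))
    (i n : ℕ) (hC : C ≤ n)
    (harc : ∀ k, i < k → k < i + n →
      ((i : ℤ) + n - k) * F w i + ((k : ℤ) - i) * F w (i + n) < (n : ℤ) * F w k) :
    False := by
  obtain ⟨P, S, hP, hPn, hS, hSn, heq⟩ := borders w h i n hC
  have h1 := harc (i + P) (by omega) (by omega)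
  have h2 := harc (i + n - S) (by omega) (by omega)
  push_cast [show ((i + n - S : ℕ) : ℤ) = (i : ℤ) + n - S by omega] at h1 h2
  set A := F w (i + P) - F w i with hA
  set B := F w (i + n) - F w (i + n - S) with hB
  set D := F w (i + n) - F w i with hD
  have h1' : (P : ℤ) * D < n * A := by simp only [hA, hD]; nlinarith [h1]
  have h2' : (n : ℤ) * B < S * D := by simp only [hB, hD]; nlinarith [h2]
  have hS' : (0 : ℤ) < S := by exact_mod_cast hS
  have hP' : (0 : ℤ) < P := by exact_mod_cast hP
  have hm1 := mul_lt_mul_of_pos_right h1' hS'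
  have hm2 := mul_lt_mul_of_pos_right h2' hP'
  have hne : (n : ℤ) * (A * S) = n * (B * P) := by rw [heq]
  nlinarith [hm1, hm2, hne]


/-- The path stays at most `(C+2)*n` below each chord. -/
lemma chord_low (w : ℕ → Bool) {C : ℕ}
    (h : ∀ i n, C ≤ n → WeaklyAbelianBordered (factor w i n)) :
    ∀ n i k : ℕ, i ≤ k → k ≤ i + n →
      ((i : ℤ) + n - k) * F w i + ((k : ℤ) - i) * F w (i + n)
        ≤ (n : ℤ) * F w k + ((C : ℤ) + 2) * n := by
  intro n
  induction n using Nat.strong_induction_on with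
  | _ n IH =>
    intro i k hik hki
    by_cases hn : n ≤ C + 2
    · -- small case
      have hm1 : F w i ≤ F w k := F_mono w hik
      have hl : F w (i + n) - F w i ≤ (n : ℤ) := by
        have := F_lip w (show i ≤ i + n by omega); push_cast at this; linarith
      have ht0 : (0 : ℤ) ≤ (k : ℤ) - i := by
        have : (i:ℤ) ≤ k := by exact_mod_cast hik
        linarith
      have ht1 : (k : ℤ) - i ≤ n := by
        have : (k:ℤ) ≤ i + n := by exact_mod_cast hki
        linarith
      have hn' : (n : ℤ) ≤ (C : ℤ) + 2 := by exact_mod_cast hn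
      have hn0 : (0 : ℤ) ≤ n := by positivity
      nlinarith [mul_le_mul_of_nonneg_left hl ht0, mul_le_mul_of_nonneg_left hm1 hn0,
        mul_le_mul_of_nonneg_right (ht1.trans hn') hn0]
    · -- large case: use no_low to find a point above the chord
      have hCn : C ≤ n := by omega
      have hne : ¬ (∀ j, i < j → j < i + n →
          (n : ℤ) * F w j < ((i : ℤ) + n - j) * F w i + ((j : ℤ) - i) * F w (i + n)) :=
        fun harc => no_low w h i n hCn harc
      push_neg at hne
      obtain ⟨m, him, hmn, hm⟩ := hne
      -- hm : chord(m) ≤ n * F w m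
      have ha : (0:ℤ) < (m : ℤ) - i := by
        have : (i:ℤ) < m := by exact_mod_cast him
        linarith
      have hb : (0:ℤ) < (i : ℤ) + n - m := by
        have : (m:ℤ) < i + n := by exact_mod_cast hmn
        linarith
      rcases le_or_gt k m with hkm | hmk
      · -- left side: apply IH on [i, m], length a = m - i
        have hIH := IH (m - i) (by omega) i k hik (by omega)
        rw [show i + (m - i) = m by omega] at hIH
        push_cast [show ((m - i : ℕ) : ℤ) = (m : ℤ) - i by omega] at hIH
        -- hIH : (i + (m-i) - k) * F i + (k - i) * F m ≤ (m-i) * F k + (C+2)*(m-i)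
        have key : ((m:ℤ) - i) * (((i : ℤ) + n - k) * F w i + ((k : ℤ) - i) * F w (i + n))
            ≤ ((m:ℤ) - i) * ((n : ℤ) * F w k + ((C : ℤ) + 2) * n) := by
          have h1 := mul_le_mul_of_nonneg_left hIH (show (0:ℤ) ≤ n by positivity)
          have h2 := mul_le_mul_of_nonneg_left hm (show (0:ℤ) ≤ (k:ℤ) - i by omega)
          have hmn2 : ((m:ℤ) - i) * n ≤ n * n := by nlinarith
          have hC0 : (0:ℤ) ≤ (C:ℤ) + 2 := by positivity
          nlinarith [mul_le_mul_of_nonneg_left hmn2 hC0]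
        exact le_of_mul_le_mul_left key ha
      · -- right side: apply IH on [m, i + n], length b = i + n - m
        have hIH := IH (i + n - m) (by omega) m k (by omega) (by omega)
        rw [show m + (i + n - m) = i + n by omega] at hIH
        push_cast [show ((i + n - m : ℕ) : ℤ) = (i : ℤ) + n - m by omega] at hIH
        have key : ((i:ℤ) + n - m) * (((i : ℤ) + n - k) * F w i + ((k : ℤ) - i) * F w (i + n))
            ≤ ((i:ℤ) + n - m) * ((n : ℤ) * F w k + ((C : ℤ) + 2) * n) := by
          have h1 := mul_le_mul_of_nonneg_left hIH (show (0:ℤ) ≤ n by positivity)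
          have h2 := mul_le_mul_of_nonneg_left hm (show (0:ℤ) ≤ (i:ℤ) + n - k by omega)
          have hbn : ((i:ℤ) + n - m) * n ≤ n * n := by nlinarith
          have hC0 : (0:ℤ) ≤ (C:ℤ) + 2 := by positivity
          nlinarith [mul_le_mul_of_nonneg_left hbn hC0]
        exact le_of_mul_le_mul_left key hb

/-- The path stays at most `(C+2)*n` above each chord. -/
lemma chord_high (w : ℕ → Bool) {C : ℕ}
    (h : ∀ i n, C ≤ n → WeaklyAbelianBordered (factor w i n)) :
    ∀ n i k : ℕ, i ≤ k → k ≤ i + n →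
      (n : ℤ) * F w k
        ≤ ((i : ℤ) + n - k) * F w i + ((k : ℤ) - i) * F w (i + n) + ((C : ℤ) + 2) * n := by
  intro n
  induction n using Nat.strong_induction_on with
  | _ n IH =>
    intro i k hik hki
    by_cases hn : n ≤ C + 2
    · -- small case
      have hm1 : F w i ≤ F w (i + n) := F_mono w (by omega)
      have hl : F w k - F w i ≤ (k : ℤ) - i := by
        have := F_lip w hik; linarith
      have ht0 : (0 : ℤ) ≤ (k : ℤ) - i := by omega
      have ht1 : (k : ℤ) - i ≤ n := by omega
      have hn' : (n : ℤ) ≤ (C : ℤ) + 2 := by exact_mod_cast hn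
      have hn0 : (0 : ℤ) ≤ n := by positivity
      nlinarith [mul_le_mul_of_nonneg_left hl hn0,
        mul_le_mul_of_nonneg_left (ht1.trans hn') hn0,
        mul_nonneg ht0 (sub_nonneg.mpr hm1)]
    · -- large case: use no_high to find a point below the chord
      have hCn : C ≤ n := by omega
      have hne : ¬ (∀ j, i < j → j < i + n →
          ((i : ℤ) + n - j) * F w i + ((j : ℤ) - i) * F w (i + n) < (n : ℤ) * F w j) :=
        fun harc => no_high w h i n hCn harc
      push_neg at hne
      obtain ⟨m, him, hmn, hm⟩ := hne
      -- hm : n * F w m ≤ chord(m)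
      have ha : (0:ℤ) < (m : ℤ) - i := by omega
      have hb : (0:ℤ) < (i : ℤ) + n - m := by omega
      rcases le_or_gt k m with hkm | hmk
      · have hIH := IH (m - i) (by omega) i k hik (by omega)
        rw [show i + (m - i) = m by omega] at hIH
        push_cast [show ((m - i : ℕ) : ℤ) = (m : ℤ) - i by omega] at hIH
        have key : ((m:ℤ) - i) * ((n : ℤ) * F w k)
            ≤ ((m:ℤ) - i) * (((i : ℤ) + n - k) * F w i + ((k : ℤ) - i) * F w (i + n)
                + ((C : ℤ) + 2) * n) := by
          have h1 := mul_le_mul_of_nonneg_left hIH (show (0:ℤ) ≤ n by positivity)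
          have h2 := mul_le_mul_of_nonneg_left hm (show (0:ℤ) ≤ (k:ℤ) - i by omega)
          have hmn2 : ((m:ℤ) - i) * n ≤ n * n := by nlinarith
          have hC0 : (0:ℤ) ≤ (C:ℤ) + 2 := by positivity
          nlinarith [mul_le_mul_of_nonneg_left hmn2 hC0]
        exact le_of_mul_le_mul_left key ha
      · have hIH := IH (i + n - m) (by omega) m k (by omega) (by omega)
        rw [show m + (i + n - m) = i + n by omega] at hIH
        push_cast [show ((i + n - m : ℕ) : ℤ) = (i : ℤ) + n - m by omega] at hIH
        have key : ((i:ℤ) + n - m) * ((n : ℤ) * F w k)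
            ≤ ((i:ℤ) + n - m) * (((i : ℤ) + n - k) * F w i + ((k : ℤ) - i) * F w (i + n)
                + ((C : ℤ) + 2) * n) := by
          have h1 := mul_le_mul_of_nonneg_left hIH (show (0:ℤ) ≤ n by positivity)
          have h2 := mul_le_mul_of_nonneg_left hm (show (0:ℤ) ≤ (i:ℤ) + n - k by omega)
          have hbn : ((i:ℤ) + n - m) * n ≤ n * n := by nlinarith
          have hC0 : (0:ℤ) ≤ (C:ℤ) + 2 := by positivity
          nlinarith [mul_le_mul_of_nonneg_left hbn hC0]
        exact le_of_mul_le_mul_left key hb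

lemma F_zero (w : ℕ → Bool) : F w 0 = 0 := rfl

lemma count_bool (l : List Bool) : l.count false + l.count true = l.length := by
  induction l with
  | nil => simp
  | cons b t ih => cases b <;> simp [List.count_cons, ih] <;> omega

lemma count_false_factor (w : ℕ → Bool) (i n : ℕ) :
    ((factor w i n).count false : ℤ) = (n : ℤ) - ((factor w i n).count true : ℤ) := by
  have := count_bool (factor w i n)
  rw [length_factor] at this
  omega

end Aux

/-- An infinite binary word all of whose sufficiently long factors are weakly abelian
bordered is balanced. -/
theorem stmt_5 (w : ℕ → Bool)
    (h : ∃ C : ℕ, ∀ i n, C ≤ n → WeaklyAbelianBordered (factor w i n)) :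
    ∃ K : ℕ, ∀ (a : Bool) (i j n : ℕ),
      |((factor w i n).count a : ℤ) - ((factor w j n).count a : ℤ)| ≤ K := by
  obtain ⟨C, h⟩ := h
  refine ⟨4 * C + 8, ?_⟩
  intro a i j n
  open Aux in
  have key : |((factor w i n).count true : ℤ) - ((factor w j n).count true : ℤ)|
      ≤ ((4 * C + 8 : ℕ) : ℤ) := by
    obtain ⟨N, hNi, hNj, hNpos⟩ : ∃ N, i + n ≤ N ∧ j + n ≤ N ∧ 0 < N :=
      ⟨i + j + n + 1, by omega, by omega, by omega⟩
    have hbound : ∀ k : ℕ, k ≤ N →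
        -(((C:ℤ)+2) * N) ≤ (N:ℤ) * F w k - (k:ℤ) * F w N ∧
        (N:ℤ) * F w k - (k:ℤ) * F w N ≤ ((C:ℤ)+2) * N := by
      intro k hk
      have h1 := chord_low w h N 0 k (by omega) (by omega)
      have h2 := chord_high w h N 0 k (by omega) (by omega)
      rw [F_zero] at h1 h2
      simp only [Nat.zero_add, zero_add] at h1 h2
      push_cast at h1 h2
      constructor <;> linarith
    have hi := hbound i (by omega)
    have hin := hbound (i + n) (by omega)
    have hj := hbound j (by omega)
    have hjn := hbound (j + n) (by omega)
    push_cast at hin hjn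
    rw [count_true_factor, count_true_factor]
    have hNpos' : (0:ℤ) < N := by exact_mod_cast hNpos
    have hlow : (N:ℤ) * (-((4 * C + 8 : ℕ) : ℤ))
        ≤ N * ((F w (i + n) - F w i) - (F w (j + n) - F w j)) := by
      push_cast
      linarith [hi.1, hi.2, hin.1, hin.2, hj.1, hj.2, hjn.1, hjn.2]
    have hhigh : (N:ℤ) * ((F w (i + n) - F w i) - (F w (j + n) - F w j))
        ≤ N * ((4 * C + 8 : ℕ) : ℤ) := by
      push_cast
      linarith [hi.1, hi.2, hin.1, hin.2, hj.1, hj.2, hjn.1, hjn.2]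
    have l1 := le_of_mul_le_mul_left hlow hNpos'
    have l2 := le_of_mul_le_mul_left hhigh hNpos'
    rw [abs_le]
    exact ⟨by linarith, l2⟩
  cases a with
  | true => exact key
  | false =>
    rw [count_false_factor, count_false_factor]
    have heq : ((n : ℤ) - ((factor w i n).count true : ℤ))
        - ((n : ℤ) - ((factor w j n).count true : ℤ))
        = -((((factor w i n).count true : ℤ)) - (((factor w j n).count true : ℤ))) := by ring
    rw [heq, abs_neg]
    exact key
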